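/- Under the duality pairing ⟨Z_α, M_β⟩ = δ_{α,β} between NSymm and QSymm, the coproduct of NSymm is dual to the overlapping shuffle product of QSymm: ⟨μ(Z_α), M_β ⊗ M_γ⟩ = ⟨Z_α, M_β · M_γ⟩ for all compositions α, β, γ. -/

import Mathlib

open TensorProduct

/-- `NSymm = ℤ⟨Z₁, Z₂, …⟩`, the generator indexed by `n` representing `Z_{n+1}`. -/
abbrev NSymm : Type := FreeAlgebra ℤ ℕ

/-- The generators `Z_n`, with `Z 0 = 1`. -/
noncomputable def Z : ℕ → NSymm
  | 0 => 1
  | n + 1 => FreeAlgebra.ι ℤ n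

/-- The monomial `Z_α = Z_{a₁} ⋯ Z_{a_m}` attached to a composition
`α = [a₁,…,a_m]`. -/
noncomputable def Zl (α : List ℕ+) : NSymm := (α.map fun a => Z (a : ℕ)).prod

/-- The overlapping shuffle product of compositions. -/
noncomputable def osh : List ℕ+ → List ℕ+ → (List ℕ+ →₀ ℤ)
  | [], β => Finsupp.single β 1
  | a :: α', [] => Finsupp.single (a :: α') 1
  | a :: α', b :: β' =>
      Finsupp.mapDomain (a :: ·) (osh α' (b :: β'))
        + Finsupp.mapDomain (b :: ·) (osh (a :: α') β')
        + Finsupp.mapDomain ((a + b) :: ·) (osh α' β')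
  termination_by α β => α.length + β.length
  decreasing_by all_goals (simp [List.length_cons]; try omega)

/-- Its `ℤ`-bilinear extension: the multiplication of `QSymm`. -/
noncomputable def oshMul (x y : List ℕ+ →₀ ℤ) : List ℕ+ →₀ ℤ :=
  x.sum fun α c => y.sum fun β d => (c * d) • osh α β

def consP : ℕ → List ℕ+ → List ℕ+
  | 0, l => l
  | n + 1, l => ⟨n + 1, n.succ_pos⟩ :: l

lemma consP_injective (n : ℕ) : Function.Injective (consP n) := by
  cases n with
  | zero => exact fun a b h => h
  | succ n => exact fun a b h => (List.cons.inj h).2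

lemma consP_coe (a : ℕ+) (l : List ℕ+) : consP (a : ℕ) l = a :: l := by
  obtain ⟨v, hv⟩ := a
  cases v with
  | zero => exact absurd hv (by omega)
  | succ v => simp [consP]

lemma consP_eq_nil {n : ℕ} {l : List ℕ+} : consP n l = [] ↔ n = 0 ∧ l = [] := by
  cases n <;> simp [consP]

lemma Zl_consP (n : ℕ) (l : List ℕ+) : Zl (consP n l) = Z n * Zl l := by
  cases n with
  | zero => simp [consP, Z]
  | succ n => rfl

lemma mapDomain_cons_apply_nil (x : ℕ+) (f : List ℕ+ →₀ ℤ) :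
    Finsupp.mapDomain (x :: ·) f [] = 0 :=
  Finsupp.mapDomain_notin_range _ _ (by rintro ⟨l, hl⟩; cases hl)

lemma mapDomain_cons_apply (x a : ℕ+) (f : List ℕ+ →₀ ℤ) (l : List ℕ+) :
    Finsupp.mapDomain (x :: ·) f (a :: l) = if x = a then f l else 0 := by
  by_cases h : x = a
  · subst h
    rw [if_pos rfl, Finsupp.mapDomain_apply (fun _ _ h => (List.cons.injEq _ _ _ _ ▸ h).2) f l]
  · rw [if_neg h, Finsupp.mapDomain_notin_range]
    rintro ⟨m, hm⟩
    exact h (List.cons.injEq _ _ _ _ ▸ hm).1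

-- pair mapDomain helpers
lemma mapDomain_pair_right (x : ℕ+) (f : List ℕ+ × List ℕ+ →₀ ℤ) (β : List ℕ+)
    (c : ℕ+) (γ' : List ℕ+) :
    Finsupp.mapDomain (fun q : List ℕ+ × List ℕ+ => (q.1, x :: q.2)) f (β, c :: γ')
      = if x = c then f (β, γ') else 0 := by
  have hinj : Function.Injective (fun q : List ℕ+ × List ℕ+ => (q.1, x :: q.2)) := by
    intro q r h
    simp only [Prod.mk.injEq, List.cons.injEq, true_and] at h
    exact Prod.ext h.1 h.2
  by_cases h : x = c
  · subst h
    rw [if_pos rfl]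
    exact Finsupp.mapDomain_apply hinj f (β, γ')
  · rw [if_neg h, Finsupp.mapDomain_notin_range]
    rintro ⟨q, hq⟩
    exact h (List.cons.injEq _ _ _ _ ▸ congrArg Prod.snd hq).1

lemma mapDomain_pair_right_nil (x : ℕ+) (f : List ℕ+ × List ℕ+ →₀ ℤ) (β : List ℕ+) :
    Finsupp.mapDomain (fun q : List ℕ+ × List ℕ+ => (q.1, x :: q.2)) f (β, []) = 0 := by
  rw [Finsupp.mapDomain_notin_range]
  rintro ⟨q, hq⟩
  cases congrArg Prod.snd hq

lemma mapDomain_pair_left (x : ℕ+) (f : List ℕ+ × List ℕ+ →₀ ℤ)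
    (b : ℕ+) (β' γ : List ℕ+) :
    Finsupp.mapDomain (fun q : List ℕ+ × List ℕ+ => (x :: q.1, q.2)) f (b :: β', γ)
      = if x = b then f (β', γ) else 0 := by
  have hinj : Function.Injective (fun q : List ℕ+ × List ℕ+ => (x :: q.1, q.2)) := by
    intro q r h
    simp only [Prod.mk.injEq, List.cons.injEq, true_and] at h
    exact Prod.ext h.1 h.2
  by_cases h : x = b
  · subst h
    rw [if_pos rfl]
    exact Finsupp.mapDomain_apply hinj f (β', γ)
  · rw [if_neg h, Finsupp.mapDomain_notin_range]
    rintro ⟨q, hq⟩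
    exact h (List.cons.injEq _ _ _ _ ▸ congrArg Prod.fst hq).1

lemma mapDomain_pair_left_nil (x : ℕ+) (f : List ℕ+ × List ℕ+ →₀ ℤ) (γ : List ℕ+) :
    Finsupp.mapDomain (fun q : List ℕ+ × List ℕ+ => (x :: q.1, q.2)) f ([], γ) = 0 := by
  rw [Finsupp.mapDomain_notin_range]
  rintro ⟨q, hq⟩
  cases congrArg Prod.fst hq

lemma mapDomain_pair_both (x y : ℕ+) (f : List ℕ+ × List ℕ+ →₀ ℤ)
    (b c : ℕ+) (β' γ' : List ℕ+) :
    Finsupp.mapDomain (fun q : List ℕ+ × List ℕ+ => (x :: q.1, y :: q.2)) f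
        (b :: β', c :: γ')
      = if x = b ∧ y = c then f (β', γ') else 0 := by
  have hinj : Function.Injective (fun q : List ℕ+ × List ℕ+ => (x :: q.1, y :: q.2)) := by
    intro q r h
    simp only [Prod.mk.injEq, List.cons.injEq, true_and] at h
    exact Prod.ext h.1 h.2
  by_cases h : x = b ∧ y = c
  · obtain ⟨h1, h2⟩ := h
    subst h1; subst h2
    rw [if_pos ⟨rfl, rfl⟩]
    exact Finsupp.mapDomain_apply hinj f (β', γ')
  · rw [if_neg h, Finsupp.mapDomain_notin_range]
    rintro ⟨q, hq⟩
    exact h ⟨(List.cons.injEq _ _ _ _ ▸ congrArg Prod.fst hq).1,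
      (List.cons.injEq _ _ _ _ ▸ congrArg Prod.snd hq).1⟩

lemma mapDomain_pair_both_nil_left (x y : ℕ+) (f : List ℕ+ × List ℕ+ →₀ ℤ) (γ : List ℕ+) :
    Finsupp.mapDomain (fun q : List ℕ+ × List ℕ+ => (x :: q.1, y :: q.2)) f ([], γ) = 0 := by
  rw [Finsupp.mapDomain_notin_range]
  rintro ⟨q, hq⟩
  cases congrArg Prod.fst hq

lemma mapDomain_pair_both_nil_right (x y : ℕ+) (f : List ℕ+ × List ℕ+ →₀ ℤ) (β : List ℕ+) :
    Finsupp.mapDomain (fun q : List ℕ+ × List ℕ+ => (x :: q.1, y :: q.2)) f (β, []) = 0 := by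
  rw [Finsupp.mapDomain_notin_range]
  rintro ⟨q, hq⟩
  cases congrArg Prod.snd hq

noncomputable def D : List ℕ+ → (List ℕ+ × List ℕ+ →₀ ℤ)
  | [] => Finsupp.single ([], []) 1
  | a :: α => ∑ p ∈ Finset.HasAntidiagonal.antidiagonal (a : ℕ),
      Finsupp.mapDomain (fun q => (consP p.1 q.1, consP p.2 q.2)) (D α)

lemma osh_apply_nil (β γ : List ℕ+) :
    osh β γ [] = if β = [] ∧ γ = [] then 1 else 0 := by
  match β, γ with
  | [], γ =>
    rw [osh]
    simp [Finsupp.single_apply, eq_comm]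
  | a :: α', [] =>
    rw [osh]
    simp [Finsupp.single_apply]
  | a :: α', b :: β' =>
    rw [osh]
    simp [Finsupp.add_apply, mapDomain_cons_apply_nil]

lemma osh_nil_left (γ : List ℕ+) : osh [] γ = Finsupp.single γ 1 := by rw [osh]

lemma osh_nil_right (β : List ℕ+) : osh β [] = Finsupp.single β 1 := by
  cases β with
  | nil => rw [osh]
  | cons a l => rw [osh]

lemma D_apply : ∀ (α β γ : List ℕ+), D α (β, γ) = osh β γ α := by
  intro α
  induction α with
  | nil =>
    intro β γ
    rw [D, Finsupp.single_apply]
    rw [show osh β γ [] = if β = [] ∧ γ = [] then 1 else 0 from osh_apply_nil β γ]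
    by_cases h : β = [] ∧ γ = []
    · rw [if_pos h, if_pos (by simp [h.1, h.2])]
    · rw [if_neg h, if_neg (by
        intro hh
        rw [Prod.mk.injEq] at hh
        exact h ⟨hh.1.symm, hh.2.symm⟩)]
  | cons a α IH =>
    intro β γ
    rw [D, Finsupp.finset_sum_apply]
    have ha := a.pos
    match β, γ with
    | [], [] =>
      rw [osh, Finsupp.single_apply, if_neg (by simp)]
      refine Finset.sum_eq_zero fun p hp => ?_
      rw [Finset.HasAntidiagonal.mem_antidiagonal] at hp
      rw [Finsupp.mapDomain_notin_range]
      rintro ⟨q, hq⟩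
      rw [Prod.mk.injEq] at hq
      have h1 := consP_eq_nil.mp hq.1
      have h2 := consP_eq_nil.mp hq.2
      omega
    | [], c :: γ' =>
      rw [osh_nil_left, Finsupp.single_apply]
      rw [Finset.sum_eq_single_of_mem ((0 : ℕ), (a : ℕ)) (by simp)]
      · show (Finsupp.mapDomain (fun q : List ℕ+ × List ℕ+ =>
            (consP 0 q.1, consP (a : ℕ) q.2)) (D α)) ([], c :: γ') = _
        have hfun : (fun q : List ℕ+ × List ℕ+ => (consP 0 q.1, consP (a : ℕ) q.2))
            = fun q : List ℕ+ × List ℕ+ => (q.1, a :: q.2) := by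
          funext q; rw [consP_coe]; rfl
        rw [hfun, mapDomain_pair_right, IH, osh_nil_left, Finsupp.single_apply]
        by_cases h1 : a = c
        · subst h1
          by_cases h2 : γ' = α
          · subst h2; simp
          · rw [if_pos rfl, if_neg h2, if_neg (by simp [h2])]
        · rw [if_neg h1, if_neg (by
            intro hh
            rw [List.cons.injEq] at hh
            exact h1 hh.1.symm)]
      · intro p hp hne
        rw [Finset.HasAntidiagonal.mem_antidiagonal] at hp
        have hp1 : p.1 ≠ 0 := fun h0 => hne (Prod.ext h0 (by omega))
        rw [Finsupp.mapDomain_notin_range]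
        rintro ⟨q, hq⟩
        rw [Prod.mk.injEq] at hq
        exact hp1 (consP_eq_nil.mp hq.1).1
    | b :: β', [] =>
      rw [osh_nil_right, Finsupp.single_apply]
      rw [Finset.sum_eq_single_of_mem ((a : ℕ), (0 : ℕ)) (by simp)]
      · show (Finsupp.mapDomain (fun q : List ℕ+ × List ℕ+ =>
            (consP (a : ℕ) q.1, consP 0 q.2)) (D α)) (b :: β', []) = _
        have hfun : (fun q : List ℕ+ × List ℕ+ => (consP (a : ℕ) q.1, consP 0 q.2))
            = fun q : List ℕ+ × List ℕ+ => (a :: q.1, q.2) := by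
          funext q; rw [consP_coe]; rfl
        rw [hfun, mapDomain_pair_left, IH, osh_nil_right, Finsupp.single_apply]
        by_cases h1 : a = b
        · subst h1
          by_cases h2 : β' = α
          · subst h2; simp
          · rw [if_pos rfl, if_neg h2, if_neg (by simp [h2])]
        · rw [if_neg h1, if_neg (by
            intro hh
            rw [List.cons.injEq] at hh
            exact h1 hh.1.symm)]
      · intro p hp hne
        rw [Finset.HasAntidiagonal.mem_antidiagonal] at hp
        have hp2 : p.2 ≠ 0 := fun h0 => hne (Prod.ext (by omega) h0)
        rw [Finsupp.mapDomain_notin_range]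
        rintro ⟨q, hq⟩
        rw [Prod.mk.injEq] at hq
        exact hp2 (consP_eq_nil.mp hq.2).1
    | b :: β', c :: γ' =>
      have hb := b.pos
      have hc := c.pos
      rw [osh]
      rw [Finsupp.add_apply, Finsupp.add_apply, mapDomain_cons_apply,
        mapDomain_cons_apply, mapDomain_cons_apply]
      have key : ∀ p ∈ Finset.HasAntidiagonal.antidiagonal (a : ℕ),
          (Finsupp.mapDomain (fun q : List ℕ+ × List ℕ+ =>
            (consP p.1 q.1, consP p.2 q.2)) (D α)) (b :: β', c :: γ')
          = (if p = ((a : ℕ), 0) then (if b = a then D α (β', c :: γ') else 0) else 0)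
            + (if p = (0, (a : ℕ)) then (if c = a then D α (b :: β', γ') else 0) else 0)
            + (if p = ((b : ℕ), (c : ℕ)) then D α (β', γ') else 0) := by
        rintro ⟨i, j⟩ hp
        rw [Finset.HasAntidiagonal.mem_antidiagonal] at hp
        simp only at hp
        match i, j with
        | 0, j =>
          have hj : j = (a : ℕ) := by omega
          subst hj
          have h1 : ((0 : ℕ), (a : ℕ)) ≠ ((a : ℕ), (0 : ℕ)) := by
            intro h; rw [Prod.mk.injEq] at h; omega
          have h3 : ((0 : ℕ), (a : ℕ)) ≠ ((b : ℕ), (c : ℕ)) := by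
            intro h; rw [Prod.mk.injEq] at h; omega
          rw [if_neg h1, if_pos rfl, if_neg h3, zero_add, add_zero]
          have hfun : (fun q : List ℕ+ × List ℕ+ => (consP 0 q.1, consP (a : ℕ) q.2))
              = fun q : List ℕ+ × List ℕ+ => (q.1, a :: q.2) := by
            funext q; rw [consP_coe]; rfl
          rw [hfun, mapDomain_pair_right]
          by_cases h : a = c
          · rw [if_pos h, if_pos h.symm]
          · rw [if_neg h, if_neg fun hh => h hh.symm]
        | (i + 1), 0 =>
          have hi : i + 1 = (a : ℕ) := by omega
          have h2 : ((i + 1 : ℕ), (0 : ℕ)) ≠ ((0 : ℕ), (a : ℕ)) := by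
            intro h; rw [Prod.mk.injEq] at h; omega
          have h3 : ((i + 1 : ℕ), (0 : ℕ)) ≠ ((b : ℕ), (c : ℕ)) := by
            intro h; rw [Prod.mk.injEq] at h; omega
          rw [if_pos (by rw [hi]), if_neg h2, if_neg h3, add_zero, add_zero]
          have hfun : (fun q : List ℕ+ × List ℕ+ => (consP (i + 1) q.1, consP 0 q.2))
              = fun q : List ℕ+ × List ℕ+ => (a :: q.1, q.2) := by
            funext q; rw [hi, consP_coe]; rfl
          rw [hfun, mapDomain_pair_left]
          by_cases h : a = b
          · rw [if_pos h, if_pos h.symm]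
          · rw [if_neg h, if_neg fun hh => h hh.symm]
        | (i + 1), (j + 1) =>
          have h1 : ((i + 1 : ℕ), (j + 1 : ℕ)) ≠ ((a : ℕ), (0 : ℕ)) := by
            intro h; rw [Prod.mk.injEq] at h; omega
          have h2 : ((i + 1 : ℕ), (j + 1 : ℕ)) ≠ ((0 : ℕ), (a : ℕ)) := by
            intro h; rw [Prod.mk.injEq] at h; omega
          rw [if_neg h1, if_neg h2, zero_add, zero_add]
          by_cases h : (i + 1 : ℕ) = (b : ℕ) ∧ (j + 1 : ℕ) = (c : ℕ)
          · have hfun : (fun q : List ℕ+ × List ℕ+ => (consP (i + 1) q.1, consP (j + 1) q.2))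
                = fun q : List ℕ+ × List ℕ+ => (b :: q.1, c :: q.2) := by
              funext q; rw [h.1, h.2, consP_coe, consP_coe]
            rw [hfun, mapDomain_pair_both, if_pos ⟨rfl, rfl⟩,
              if_pos (by rw [Prod.mk.injEq]; exact ⟨h.1, h.2⟩)]
          · rw [if_neg (by
              intro hh
              rw [Prod.mk.injEq] at hh
              exact h hh)]
            rw [Finsupp.mapDomain_notin_range]
            rintro ⟨q, hq⟩
            simp only [consP, Prod.mk.injEq, List.cons.injEq] at hq
            refine h ⟨?_, ?_⟩
            · rw [← (List.cons.inj hq.1).1]; rfl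
            · rw [← (List.cons.inj hq.2).1]; rfl
      rw [Finset.sum_congr rfl key]
      rw [Finset.sum_add_distrib, Finset.sum_add_distrib,
        Finset.sum_ite_eq' _ (((a : ℕ), (0 : ℕ)))
          (fun _ => if b = a then D α (β', c :: γ') else 0),
        Finset.sum_ite_eq' _ (((0 : ℕ), (a : ℕ)))
          (fun _ => if c = a then D α (b :: β', γ') else 0),
        Finset.sum_ite_eq' _ (((b : ℕ), (c : ℕ))) (fun _ => D α (β', γ'))]
      rw [if_pos (show ((a : ℕ), (0 : ℕ)) ∈ Finset.HasAntidiagonal.antidiagonal (a : ℕ) by simp),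
        if_pos (show ((0 : ℕ), (a : ℕ)) ∈ Finset.HasAntidiagonal.antidiagonal (a : ℕ) by simp)]
      rw [IH β' (c :: γ'), IH (b :: β') γ']
      by_cases hbc : b + c = a
      · rw [if_pos (show ((b : ℕ), (c : ℕ)) ∈ Finset.HasAntidiagonal.antidiagonal (a : ℕ) from
            Finset.HasAntidiagonal.mem_antidiagonal.mpr (by rw [← PNat.add_coe, hbc])),
          if_pos hbc, IH β' γ']
      · rw [if_neg hbc, if_neg (show ((b : ℕ), (c : ℕ)) ∉ Finset.HasAntidiagonal.antidiagonal (a : ℕ) by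
            intro h
            rw [Finset.HasAntidiagonal.mem_antidiagonal] at h
            exact hbc (by
              apply PNat.coe_injective
              rw [PNat.add_coe]
              exact h)), add_zero]

abbrev nsymmMod : Module ℤ NSymm := Algebra.toModule

section
attribute [local instance] nsymmMod

lemma mu_Zl_aux (μ : NSymm →ₐ[ℤ] NSymm ⊗[ℤ] NSymm)
    (hμ : ∀ n : ℕ, μ (Z n) = ∑ p ∈ Finset.HasAntidiagonal.antidiagonal n, Z p.1 ⊗ₜ[ℤ] Z p.2) :
    ∀ α : List ℕ+, μ (Zl α) = (D α).sum fun p c => c • (Zl p.1 ⊗ₜ[ℤ] Zl p.2) := by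
  intro α
  induction α with
  | nil =>
    rw [show Zl [] = 1 by simp [Zl], map_one, D,
      Finsupp.sum_single_index (by exact zero_smul _ _)]
    rw [show Zl [] = 1 by simp [Zl], one_smul, Algebra.TensorProduct.one_def]
  | cons a α IH =>
    rw [show Zl (a :: α) = Z (a : ℕ) * Zl α by simp [Zl], map_mul, hμ, IH, D]
    rw [Finset.sum_mul,
      ← Finsupp.sum_finset_sum_index (fun p => by exact zero_smul _ _)
        (fun p c₁ c₂ => by exact add_smul _ _ _)]
    refine Finset.sum_congr rfl fun p hp => ?_
    rw [Finsupp.sum_mapDomain_index (fun q => by exact zero_smul _ _)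
      (fun q c₁ c₂ => by exact add_smul _ _ _), Finsupp.mul_sum]
    refine Finsupp.sum_congr fun q hq => ?_
    rw [mul_smul_comm, Algebra.TensorProduct.tmul_mul_tmul, Zl_consP, Zl_consP]

end

lemma mu_Zl (μ : NSymm →ₐ[ℤ] @TensorProduct ℤ _ NSymm NSymm _ _ Algebra.toModule Algebra.toModule)
    (hμ : ∀ n : ℕ, μ (Z n) = ∑ p ∈ Finset.HasAntidiagonal.antidiagonal n, Z p.1 ⊗ₜ[ℤ] Z p.2) :
    ∀ α : List ℕ+, μ (Zl α) = (D α).sum fun p c => c • (Zl p.1 ⊗ₜ[ℤ] Zl p.2) :=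
  mu_Zl_aux μ hμ



/-- Under the duality pairing `⟨Z_α, M_β⟩ = δ_{α,β}` between `NSymm` and `QSymm`
(with `⟨x ⊗ y, x' ⊗ y'⟩ = ⟨x,x'⟩⟨y,y'⟩` on tensor squares), the coproduct
`μ(Z_n) = ∑_{i+j=n} Z_i ⊗ Z_j` of `NSymm` is dual to the overlapping shuffle
product of `QSymm`: `⟨μ(Z_α), M_β ⊗ M_γ⟩ = ⟨Z_α, M_β · M_γ⟩`. -/
theorem nsymm_coproduct_dual_to_overlapping_shuffle
    (μ : NSymm →ₐ[ℤ] @TensorProduct ℤ _ NSymm NSymm _ _ Algebra.toModule Algebra.toModule)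
    (hμ : ∀ n : ℕ, μ (Z n) = ∑ p ∈ Finset.HasAntidiagonal.antidiagonal n, Z p.1 ⊗ₜ[ℤ] Z p.2)
    (pair : NSymm →ₗ[ℤ] (List ℕ+ →₀ ℤ) →ₗ[ℤ] ℤ)
    (hpair : ∀ α β : List ℕ+,
      pair (Zl α) (Finsupp.single β 1) = if α = β then 1 else 0)
    (pair2 : NSymm ⊗[ℤ] NSymm →ₗ[ℤ]
      ((List ℕ+ →₀ ℤ) ⊗[ℤ] (List ℕ+ →₀ ℤ)) →ₗ[ℤ] ℤ)
    (hpair2 : ∀ (x y : NSymm) (u v : List ℕ+ →₀ ℤ),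
      pair2 (x ⊗ₜ[ℤ] y) (u ⊗ₜ[ℤ] v) = pair x u * pair y v) :
    ∀ α β γ : List ℕ+,
      pair2 (μ (Zl α)) (Finsupp.single β 1 ⊗ₜ[ℤ] Finsupp.single γ 1)
        = pair (Zl α) (oshMul (Finsupp.single β 1) (Finsupp.single γ 1)) := by
  intro α β γ
  have hosh : oshMul (Finsupp.single β 1) (Finsupp.single γ 1) = osh β γ := by
    rw [oshMul, Finsupp.sum_single_index (by
        rw [Finsupp.sum_single_index (by rw [zero_mul, zero_smul]), zero_mul, zero_smul]),
      Finsupp.sum_single_index (by rw [mul_zero, zero_smul]), one_mul, one_smul]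
  have hR : pair (Zl α) (osh β γ) = osh β γ α := by
    conv_lhs => rw [← Finsupp.sum_single (osh β γ)]
    rw [map_finsuppSum]
    trans (osh β γ).sum fun b c => if α = b then c else 0
    · refine Finsupp.sum_congr fun b hb => ?_
      rw [show Finsupp.single b ((osh β γ) b) = ((osh β γ) b) • Finsupp.single b 1 by
          rw [Finsupp.smul_single, smul_eq_mul, mul_one],
        map_smul, hpair, smul_eq_mul, mul_ite, mul_one, mul_zero]
    · exact Finsupp.sum_ite_self_eq _ _
  have hL : pair2 (μ (Zl α))
      (Finsupp.single β 1 ⊗ₜ[ℤ] Finsupp.single γ 1) = D α (β, γ) := by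
    rw [mu_Zl μ hμ α, map_finsuppSum, Finsupp.sum, LinearMap.sum_apply]
    have step : ∀ p ∈ (D α).support,
        (pair2 ((D α) p • (Zl p.1 ⊗ₜ[ℤ] Zl p.2)))
            (Finsupp.single β 1 ⊗ₜ[ℤ] Finsupp.single γ 1)
          = if p = (β, γ) then (D α) p else 0 := by
      intro p hp
      rw [map_smul, LinearMap.smul_apply, hpair2, hpair, hpair]
      by_cases h1 : p.1 = β <;> by_cases h2 : p.2 = γ <;>
        simp [h1, h2, Prod.ext_iff]
    rw [Finset.sum_congr rfl step, Finset.sum_ite_eq' _ (β, γ) (fun p => (D α) p)]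
    exact Finsupp.if_mem_support _ _
  rw [hosh, hR, hL, D_apply]
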